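/- Let V : ℝⁿ → ℝ≥0 satisfy along a hybrid arc φ: during flow d/dt V(φ(t,j)) ≤ λc V(φ(t,j)), and across jumps V(φ(t,j+1)) ≤ e^{λd} V(φ(t,j)), for constants λc, λd ∈ ℝ. Then V(φ(t,j)) ≤ e^{λc t + λd j} V(φ(0,0)) for all (t,j) ∈ dom φ. -/
import Mathlib

open Set

lemma gron_aux {f f' : ℝ → ℝ} {K a b : ℝ}
    (h : ∀ τ ∈ Icc a b, HasDerivWithinAt f (f' τ) (Icc a b) τ ∧ f' τ ≤ K * f τ) :
    ∀ x ∈ Icc a b, f x ≤ f a * Real.exp (K * (x - a)) := by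
  intro x hx
  have hcont : ContinuousOn f (Icc a b) := fun y hy =>
    ((h y hy).1).continuousWithinAt
  have := le_gronwallBound_of_liminf_deriv_right_le (f' := f') (δ := f a) (K := K) (ε := 0)
    hcont
    (fun y hy r hr => by
      have hd : HasDerivWithinAt f (f' y) (Ici y) y := by
        refine ((h y (Ico_subset_Icc_self hy)).1).mono_of_mem_nhdsWithin ?_
        exact Icc_mem_nhdsGE_of_mem ⟨hy.1, hy.2⟩
      exact hd.liminf_right_slope_le hr)
    le_rfl
    (fun y hy => by simpa using (h y (Ico_subset_Icc_self hy)).2)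
    x hx
  simpa [gronwallBound_ε0] using this

/-- Exponential bound along a hybrid arc: if `v τ j = V(φ(τ,j))` satisfies
`d/dτ v ≤ λc v` during flow and `v ≤ e^{λd} v⁻` across jumps, then
`v(τ,j) ≤ e^{λc τ + λd j} v(0,0)` on the hybrid time domain. -/
theorem stmt8 (t : ℕ → ℝ) (ht : Monotone t) (ht0 : t 0 = 0)
    (v : ℝ → ℕ → ℝ) (v' : ℝ → ℕ → ℝ) (lc ld : ℝ)
    (hnonneg : ∀ j, ∀ τ ∈ Icc (t j) (t (j + 1)), 0 ≤ v τ j)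
    (hflow : ∀ j, ∀ τ ∈ Icc (t j) (t (j + 1)),
      HasDerivWithinAt (fun σ => v σ j) (v' τ j) (Icc (t j) (t (j + 1))) τ ∧
      v' τ j ≤ lc * v τ j)
    (hjump : ∀ j, v (t (j + 1)) (j + 1) ≤ Real.exp ld * v (t (j + 1)) j) :
    ∀ j, ∀ τ ∈ Icc (t j) (t (j + 1)),
      v τ j ≤ Real.exp (lc * τ + ld * j) * v 0 0 := by
  -- Key: v (t j) j ≤ exp (lc * t j + ld * j) * v 0 0, by induction on j.
  have key : ∀ j, v (t j) j ≤ Real.exp (lc * t j + ld * j) * v 0 0 := by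
    intro j
    induction j with
    | zero => simp [ht0]
    | succ n ih =>
      have hmem : t (n + 1) ∈ Icc (t n) (t (n + 1)) :=
        ⟨ht (Nat.le_succ n), le_rfl⟩
      have hg := gron_aux (f := fun σ => v σ n) (f' := fun σ => v' σ n)
        (hflow n) (t (n + 1)) hmem
      have h1 : v (t (n + 1)) n ≤ Real.exp (lc * t (n + 1) + ld * n) * v 0 0 := by
        calc v (t (n + 1)) n
            ≤ v (t n) n * Real.exp (lc * (t (n + 1) - t n)) := hg
          _ ≤ (Real.exp (lc * t n + ld * n) * v 0 0) * Real.exp (lc * (t (n + 1) - t n)) := by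
              exact mul_le_mul_of_nonneg_right ih (Real.exp_nonneg _)
          _ = Real.exp (lc * t (n + 1) + ld * n) * v 0 0 := by
              rw [mul_right_comm, ← Real.exp_add]; ring_nf
      push_cast
      calc v (t (n + 1)) (n + 1) ≤ Real.exp ld * v (t (n + 1)) n := hjump n
        _ ≤ Real.exp ld * (Real.exp (lc * t (n + 1) + ld * n) * v 0 0) :=
            mul_le_mul_of_nonneg_left h1 (Real.exp_nonneg _)
        _ = Real.exp (lc * t (n + 1) + ld * ((n : ℝ) + 1)) * v 0 0 := by
            rw [← mul_assoc, ← Real.exp_add]; ring_nf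
  intro j τ hτ
  have hg := gron_aux (f := fun σ => v σ j) (f' := fun σ => v' σ j) (hflow j) τ hτ
  calc v τ j ≤ v (t j) j * Real.exp (lc * (τ - t j)) := hg
    _ ≤ (Real.exp (lc * t j + ld * j) * v 0 0) * Real.exp (lc * (τ - t j)) :=
        mul_le_mul_of_nonneg_right (key j) (Real.exp_nonneg _)
    _ = Real.exp (lc * τ + ld * j) * v 0 0 := by
        rw [mul_right_comm, ← Real.exp_add]; ring_nf
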